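/- Let p_s(z) = (2πs)^{−1/2} exp(−z²/(2s)) for s > 0 and z ∈ ℝ. For every T > 0 and every α ∈ (0, 1/4) there exists a constant C(T, α) > 0 such that for all t ∈ (0, T] and all δ, δ′ ∈ (0, 1]: ∫_ℝ e^{−2|x|} ( ∫_ℝ (p_{t+δ}(x − y) − p_{t+δ′}(x − y))² e^{|y|} dy ) dx ≤ C(T, α) · |δ − δ′|^α · t^{−2α − 1/2}. -/

import Mathlib

open Real MeasureTheory

/-- The one-dimensional heat kernel `p_s(z) = (2πs)^{−1/2} exp(−z²/(2s))`. -/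
noncomputable def heatKernel (s z : ℝ) : ℝ :=
  (Real.sqrt (2 * Real.pi * s))⁻¹ * Real.exp (-(z ^ 2) / (2 * s))


lemma exp_abs_ge (x : ℝ) : 1 + x^2 ≤ 4 * rexp |x| := by
  have h1 : (1:ℝ) + |x|/2 ≤ rexp (|x|/2) := by linarith [Real.add_one_le_exp (|x|/2)]
  have h2 : rexp (|x|/2) * rexp (|x|/2) = rexp |x| := by rw [← Real.exp_add]; ring_nf
  nlinarith [sq_abs x, abs_nonneg x, Real.exp_pos (|x|/2)]

lemma sq_le_rpow_mul {d A S α : ℝ} (hA : |d| ≤ A) (hS : |d| ≤ S)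
    (hα0 : 0 < α) (hα2 : α ≤ 2) : d^2 ≤ A^α * S^((2:ℝ)-α) := by
  have h0 : (0:ℝ) ≤ |d| := abs_nonneg d
  have key : d^2 = |d|^α * |d|^((2:ℝ)-α) := by
    rw [← Real.rpow_add' h0 (by norm_num : α + (2-α) ≠ 0)]
    norm_num [Real.rpow_two, sq_abs]
  rw [key]
  exact mul_le_mul (Real.rpow_le_rpow h0 hA hα0.le) (Real.rpow_le_rpow h0 hS (by linarith))
    (Real.rpow_nonneg h0 _) (Real.rpow_nonneg (h0.trans hA) _)

lemma add_rpow_le_four_mul {a b p : ℝ} (ha : 0 ≤ a) (hb : 0 ≤ b)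
    (hp0 : 0 ≤ p) (hp2 : p ≤ 2) : (a+b)^p ≤ 4*(a^p + b^p) := by
  have h4 : (2:ℝ)^p ≤ 4 := by
    calc (2:ℝ)^p ≤ 2^(2:ℝ) := Real.rpow_le_rpow_of_exponent_le one_le_two hp2
    _ = 4 := by rw [Real.rpow_two]; norm_num
  rcases le_total a b with h | h
  · calc (a+b)^p ≤ (2*b)^p := Real.rpow_le_rpow (by linarith) (by linarith) hp0
    _ = 2^p * b^p := Real.mul_rpow (by norm_num) hb
    _ ≤ 4 * b^p := by have := Real.rpow_nonneg hb p; nlinarith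
    _ ≤ 4*(a^p + b^p) := by have := Real.rpow_nonneg ha p; nlinarith
  · calc (a+b)^p ≤ (2*a)^p := Real.rpow_le_rpow (by linarith) (by linarith) hp0
    _ = 2^p * a^p := Real.mul_rpow (by norm_num) ha
    _ ≤ 4 * a^p := by have := Real.rpow_nonneg ha p; nlinarith
    _ ≤ 4*(a^p + b^p) := by have := Real.rpow_nonneg hb p; nlinarith

lemma gauss_pointwise {b : ℝ} (hb : 0 < b) (z : ℝ) :
    (1+z^2) * rexp (-(b*z^2)) * rexp |z| ≤ (1+4/b) * rexp (1/b) * rexp (-(b/2*z^2)) := by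
  have h1 : 1 + z^2 ≤ (1+4/b) * rexp (b/4*z^2) := by
    have e1 : b/4*z^2 + 1 ≤ rexp (b/4*z^2) := Real.add_one_le_exp _
    have e2 : (1:ℝ) ≤ rexp (b/4*z^2) := Real.one_le_exp (by positivity)
    have h4b : 0 < 4/b := by positivity
    calc 1 + z^2 = 1 + (4/b) * (b/4*z^2) := by field_simp
    _ ≤ 1 * rexp (b/4*z^2) + (4/b) * rexp (b/4*z^2) := by
        apply add_le_add
        · linarith
        · exact mul_le_mul_of_nonneg_left (by linarith) h4b.le
    _ = (1+4/b) * rexp (b/4*z^2) := by ring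
  have h2 : rexp |z| ≤ rexp (b/4*z^2 + 1/b) := by
    apply Real.exp_le_exp.2
    have key : 4*b*|z| ≤ b^2*z^2 + 4 := by nlinarith [sq_nonneg (b*|z| - 2), sq_abs z]
    have hbi : b * (1/b) = 1 := by field_simp
    nlinarith [key, hb, hbi]
  have hnn : (0:ℝ) ≤ (1+z^2) * rexp (-(b*z^2)) := by positivity
  calc (1+z^2) * rexp (-(b*z^2)) * rexp |z|
      ≤ ((1+4/b) * rexp (b/4*z^2)) * rexp (-(b*z^2)) * rexp (b/4*z^2 + 1/b) := by
        apply mul_le_mul _ h2 (Real.exp_pos _).le (by positivity)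
        exact mul_le_mul_of_nonneg_right h1 (Real.exp_pos _).le
    _ = (1+4/b) * rexp (b/4*z^2 + -(b*z^2) + (b/4*z^2 + 1/b)) := by
        rw [Real.exp_add (b/4*z^2 + -(b*z^2)) (b/4*z^2 + 1/b), Real.exp_add (b/4*z^2) (-(b*z^2))]
        ring
    _ = (1+4/b) * rexp (1/b) * rexp (-(b/2*z^2)) := by
        rw [mul_assoc, ← Real.exp_add]
        congr 1
        exact congrArg rexp (by ring)

lemma gauss_integrable {b : ℝ} (hb : 0 < b) :
    Integrable (fun z : ℝ => (1+z^2) * rexp (-(b*z^2)) * rexp |z|) := by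
  have hg : Integrable (fun z : ℝ => (1+4/b) * rexp (1/b) * rexp (-(b/2*z^2))) := by
    have : Integrable (fun z : ℝ => rexp (-(b/2)*z^2)) := integrable_exp_neg_mul_sq (by positivity)
    simpa [neg_mul, mul_assoc] using this.const_mul ((1+4/b) * rexp (1/b))
  refine hg.mono' ?_ (Filter.Eventually.of_forall fun z => ?_)
  · apply Continuous.aestronglyMeasurable; continuity
  · rw [Real.norm_eq_abs, abs_of_nonneg (by positivity)]
    exact gauss_pointwise hb z

lemma gauss_integral_le {b : ℝ} (hb : 0 < b) :
    ∫ z : ℝ, (1+z^2) * rexp (-(b*z^2)) * rexp |z|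
      ≤ (1+4/b) * rexp (1/b) * Real.sqrt (2*π/b) := by
  have hg : Integrable (fun z : ℝ => (1+4/b) * rexp (1/b) * rexp (-(b/2*z^2))) := by
    have : Integrable (fun z : ℝ => rexp (-(b/2)*z^2)) := integrable_exp_neg_mul_sq (by positivity)
    simpa [neg_mul, mul_assoc] using this.const_mul ((1+4/b) * rexp (1/b))
  calc ∫ z : ℝ, (1+z^2) * rexp (-(b*z^2)) * rexp |z|
      ≤ ∫ z : ℝ, (1+4/b) * rexp (1/b) * rexp (-(b/2*z^2)) := by
        apply integral_mono_of_nonneg (Filter.Eventually.of_forall fun z => by positivity) hg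
          (Filter.Eventually.of_forall fun z => gauss_pointwise hb z)
    _ = (1+4/b) * rexp (1/b) * ∫ z : ℝ, rexp (-(b/2)*z^2) := by
        rw [← integral_const_mul]
        congr 1; ext z; ring_nf
    _ = (1+4/b) * rexp (1/b) * Real.sqrt (π/(b/2)) := by rw [integral_gaussian]
    _ = (1+4/b) * rexp (1/b) * Real.sqrt (2*π/b) := by
        congr 2; field_simp



lemma heatKernel_pos {s : ℝ} (hs : 0 < s) (z : ℝ) : 0 < heatKernel s z := by
  unfold heatKernel
  have : 0 < Real.sqrt (2*π*s) := Real.sqrt_pos.2 (by positivity)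
  positivity

lemma heatKernel_le {s : ℝ} (hs : 0 < s) (z : ℝ) :
    heatKernel s z ≤ (Real.sqrt s)⁻¹ := by
  unfold heatKernel
  have h1 : Real.sqrt s ≤ Real.sqrt (2*π*s) := by
    apply Real.sqrt_le_sqrt; nlinarith [Real.pi_gt_three]
  have h2 : (0:ℝ) < Real.sqrt s := Real.sqrt_pos.2 hs
  have h3 : (Real.sqrt (2*π*s))⁻¹ ≤ (Real.sqrt s)⁻¹ := inv_anti₀ h2 h1
  have h4 : rexp (-(z^2)/(2*s)) ≤ 1 := by
    apply Real.exp_le_one_iff.2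
    apply div_nonpos_of_nonpos_of_nonneg (neg_nonpos.2 (sq_nonneg z)) (by positivity)
  calc (Real.sqrt (2*π*s))⁻¹ * rexp (-(z^2)/(2*s))
      ≤ (Real.sqrt s)⁻¹ * 1 :=
        mul_le_mul h3 h4 (Real.exp_pos _).le (by positivity)
    _ = (Real.sqrt s)⁻¹ := mul_one _

lemma heatKernel_hasDerivAt (z : ℝ) {u : ℝ} (hu : 0 < u) :
    HasDerivAt (fun s => heatKernel s z)
      (heatKernel u z * (z^2/(2*u^2) - 1/(2*u))) u := by
  have h2π : (0:ℝ) < 2*π*u := by positivity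
  have hS : (0:ℝ) < Real.sqrt (2*π*u) := Real.sqrt_pos.2 h2π
  have hlin : HasDerivAt (fun s : ℝ => 2*π*s) (2*π) u := by
    simpa using (hasDerivAt_id u).const_mul (2*π)
  have hsqrt : HasDerivAt (fun s : ℝ => Real.sqrt (2*π*s)) (1/(2*Real.sqrt (2*π*u)) * (2*π)) u :=
    (Real.hasDerivAt_sqrt h2π.ne').comp u hlin
  have hinv := hsqrt.inv hS.ne'
  have hexp_inner : HasDerivAt (fun s : ℝ => -(z^2)/(2*s)) (z^2/(2*u^2)) u := by
    have h0 : HasDerivAt (fun s : ℝ => s⁻¹) (-((u^2)⁻¹)) u := hasDerivAt_inv hu.ne'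
    have h1 := h0.const_mul (-(z^2)/2)
    have hfun : (fun s : ℝ => -(z^2)/2 * s⁻¹) = (fun s : ℝ => -(z^2)/(2*s)) := by
      funext s; ring
    rw [hfun] at h1
    convert h1 using 1
    · rfl
    · rfl
    field_simp
  have hexp := hexp_inner.exp
  have hmul := hinv.mul hexp
  convert hmul using 1
  · rfl
  · rfl
  · rfl
  unfold heatKernel
  have hsq : Real.sqrt (2*π*u) ^ 2 = 2*π*u := Real.sq_sqrt h2π.le
  rw [hsq]
  have h3 : -(1/(2*Real.sqrt (2*π*u))*(2*π))/(2*π*u) = -(1/(2*u)) * (Real.sqrt (2*π*u))⁻¹ := by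
    field_simp
  rw [h3]
  simp only [Pi.inv_apply]
  ring

lemma heatKernel_sub_le {T t : ℝ} (ht : 0 < t) (htT : t ≤ T) {s₁ s₂ : ℝ}
    (h1 : s₁ ∈ Set.Icc t (T+2)) (h2 : s₂ ∈ Set.Icc t (T+2)) (z : ℝ) :
    |heatKernel s₁ z - heatKernel s₂ z|
      ≤ (T+2)*(1+z^2)/(t^2*Real.sqrt t) * |s₁ - s₂| := by
  have hst : (0:ℝ) < Real.sqrt t := Real.sqrt_pos.2 ht
  have hderiv : ∀ u ∈ Set.Icc t (T+2),
      HasDerivWithinAt (fun s => heatKernel s z)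
        (heatKernel u z * (z^2/(2*u^2) - 1/(2*u))) (Set.Icc t (T+2)) u :=
    fun u hu => (heatKernel_hasDerivAt z (ht.trans_le hu.1)).hasDerivWithinAt
  have hbound : ∀ u ∈ Set.Icc t (T+2),
      ‖heatKernel u z * (z^2/(2*u^2) - 1/(2*u))‖ ≤ (T+2)*(1+z^2)/(t^2*Real.sqrt t) := by
    intro u hu
    have hu0 : 0 < u := ht.trans_le hu.1
    have hp := heatKernel_pos hu0 z
    rw [Real.norm_eq_abs, abs_mul, abs_of_pos hp]
    have habs : |z^2/(2*u^2) - 1/(2*u)| ≤ z^2/(2*u^2) + 1/(2*u) := by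
      refine (abs_sub _ _).trans ?_
      rw [abs_of_nonneg (by positivity), abs_of_nonneg (by positivity)]
    have hterm : z^2/(2*u^2) + 1/(2*u) ≤ (T+2)*(1+z^2)/t^2 := by
      have e1 : z^2/(2*u^2) ≤ z^2/(2*t^2) := by
        apply div_le_div_of_nonneg_left (sq_nonneg z) (by positivity)
        nlinarith [hu.1]
      have e2 : 1/(2*u) ≤ 1/(2*t) := by
        apply div_le_div_of_nonneg_left (by norm_num) (by positivity)
        linarith [hu.1]
      have e3 : z^2/(2*t^2) + 1/(2*t) ≤ (T+2)*(1+z^2)/t^2 := by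
        rw [div_add_div _ _ (by positivity : (2:ℝ)*t^2 ≠ 0) (by positivity : (2:ℝ)*t ≠ 0),
          div_le_div_iff₀ (by positivity) (by positivity)]
        have ht3 : (0:ℝ) < t^3 := by positivity
        have a1 : (0:ℝ) ≤ t^3*z^2*(4*T+6) :=
          mul_nonneg (mul_nonneg ht3.le (sq_nonneg z)) (by linarith)
        have a2 : (0:ℝ) ≤ t^3*(2*(T+2)-t) := mul_nonneg ht3.le (by linarith)
        nlinarith [a1, a2]
      linarith
    have hkle : heatKernel u z ≤ (Real.sqrt t)⁻¹ := by
      refine (heatKernel_le hu0 z).trans ?_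
      apply inv_anti₀ hst (Real.sqrt_le_sqrt hu.1)
    calc heatKernel u z * |z^2/(2*u^2) - 1/(2*u)|
        ≤ (Real.sqrt t)⁻¹ * ((T+2)*(1+z^2)/t^2) := by
          apply mul_le_mul hkle (habs.trans hterm) (abs_nonneg _) (by positivity)
      _ = (T+2)*(1+z^2)/(t^2*Real.sqrt t) := by
          rw [mul_comm, div_eq_mul_inv, div_eq_mul_inv, mul_inv, ← mul_assoc]
  have := Convex.norm_image_sub_le_of_norm_hasDerivWithin_le hderiv hbound
    (convex_Icc t (T+2)) h2 h1
  simpa [Real.norm_eq_abs] using this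

lemma heatKernel_rpow {s : ℝ} (α : ℝ) (hs : 0 < s) (z : ℝ) :
    heatKernel s z ^ ((2:ℝ)-α)
      = ((Real.sqrt (2*π*s))⁻¹)^((2:ℝ)-α) * rexp (-((2-α)/(2*s)*z^2)) := by
  unfold heatKernel
  rw [Real.mul_rpow (by positivity) (Real.exp_pos _).le, ← Real.exp_mul]
  congr 1
  ring

lemma coeff_le {T α t s : ℝ} (hα0 : 0 < α) (hα1 : α ≤ 1) (ht : 0 < t)
    (hts : t ≤ s) (hsT : s ≤ T+2) :
    ((Real.sqrt (2*π*s))⁻¹)^((2:ℝ)-α) *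
      ((1+4/((2-α)/(2*s))) * rexp (1/((2-α)/(2*s))) * Real.sqrt (2*π/((2-α)/(2*s))))
      ≤ ((1+8*(T+2)) * rexp (2*(T+2)) * Real.sqrt (4*π)) * t^((α-1)/2) := by
  have hs : 0 < s := ht.trans_le hts
  have h2α : (1:ℝ) ≤ 2-α := by linarith
  have hT2 : (0:ℝ) < T+2 := lt_of_lt_of_le hs hsT
  -- coefficient
  have hc : ((Real.sqrt (2*π*s))⁻¹)^((2:ℝ)-α) ≤ s^((-(1:ℝ)/2)*((2:ℝ)-α)) := by
    rw [Real.rpow_mul hs.le]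
    apply Real.rpow_le_rpow (by positivity) ?_ (by linarith)
    have h1 : Real.sqrt s ≤ Real.sqrt (2*π*s) := by
      apply Real.sqrt_le_sqrt; nlinarith [Real.pi_gt_three]
    have h2 : s^(-(1:ℝ)/2) = (Real.sqrt s)⁻¹ := by
      rw [show (-(1:ℝ)/2) = -(1/2) by norm_num, Real.rpow_neg hs.le, ← Real.sqrt_eq_rpow]
    rw [h2]
    exact inv_anti₀ (Real.sqrt_pos.2 hs) h1
  -- bounds on the b-dependent factors
  have e1 : 4/((2-α)/(2*s)) ≤ 8*(T+2) := by
    rw [div_div_eq_mul_div]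
    calc 4*(2*s)/(2-α) ≤ 4*(2*s) := div_le_self (by positivity) h2α
      _ ≤ 8*(T+2) := by linarith
  have e2 : 1/((2-α)/(2*s)) ≤ 2*(T+2) := by
    rw [one_div_div]
    calc 2*s/(2-α) ≤ 2*s := div_le_self (by positivity) h2α
      _ ≤ 2*(T+2) := by linarith
  have e3 : Real.sqrt (2*π/((2-α)/(2*s))) ≤ Real.sqrt (4*π) * s^((1:ℝ)/2) := by
    rw [show Real.sqrt (4*π) * s^((1:ℝ)/2) = Real.sqrt (4*π) * Real.sqrt s by
        rw [Real.sqrt_eq_rpow s], ← Real.sqrt_mul (by positivity)]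
    apply Real.sqrt_le_sqrt
    rw [div_div_eq_mul_div]
    calc 2*π*(2*s)/(2-α) ≤ 2*π*(2*s) := div_le_self (by positivity) h2α
      _ ≤ 4*π*s := by ring_nf; linarith [Real.pi_pos]
  have hmid : (1+4/((2-α)/(2*s))) * rexp (1/((2-α)/(2*s))) * Real.sqrt (2*π/((2-α)/(2*s)))
      ≤ (1+8*(T+2)) * rexp (2*(T+2)) * (Real.sqrt (4*π) * s^((1:ℝ)/2)) := by
    have hb : (0:ℝ) < (2-α)/(2*s) := by positivity
    apply mul_le_mul _ e3 (Real.sqrt_nonneg _) (by positivity)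
    apply mul_le_mul (by linarith) (Real.exp_le_exp.2 e2) (Real.exp_pos _).le (by positivity)
  calc ((Real.sqrt (2*π*s))⁻¹)^((2:ℝ)-α) *
      ((1+4/((2-α)/(2*s))) * rexp (1/((2-α)/(2*s))) * Real.sqrt (2*π/((2-α)/(2*s))))
      ≤ s^((-(1:ℝ)/2)*((2:ℝ)-α)) * ((1+8*(T+2)) * rexp (2*(T+2)) * (Real.sqrt (4*π) * s^((1:ℝ)/2))) := by
        apply mul_le_mul hc hmid (by positivity) (Real.rpow_nonneg hs.le _)
    _ = ((1+8*(T+2)) * rexp (2*(T+2)) * Real.sqrt (4*π)) * (s^((-(1:ℝ)/2)*((2:ℝ)-α)) * s^((1:ℝ)/2)) := by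
        ring
    _ = ((1+8*(T+2)) * rexp (2*(T+2)) * Real.sqrt (4*π)) * s^((α-1)/2) := by
        have he : (-(1:ℝ)/2*((2:ℝ)-α) + (1:ℝ)/2) = (α-1)/2 := by ring
        rw [← Real.rpow_add hs, he]
    _ ≤ ((1+8*(T+2)) * rexp (2*(T+2)) * Real.sqrt (4*π)) * t^((α-1)/2) := by
        apply mul_le_mul_of_nonneg_left
          (Real.rpow_le_rpow_of_nonpos ht hts (by linarith)) (by positivity)

lemma exp_neg_abs_le (x : ℝ) : rexp (-|x|) ≤ 4*(1+x^2)⁻¹ := by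
  have h0 : (0:ℝ) < 1+x^2 := by positivity
  have hc : (1+x^2)*(1+x^2)⁻¹ = 1 := mul_inv_cancel₀ h0.ne'
  have h := exp_abs_ge x
  rw [Real.exp_neg, ← one_div, div_le_iff₀ (Real.exp_pos _), ← sub_nonneg]
  nlinarith [inv_pos.2 h0, Real.exp_pos |x|]


set_option maxHeartbeats 2000000 in
/-- Exponentially weighted `L²` estimate on time-increments of the heat kernel (key step
of Lemma 5.3): for every `T > 0` and `α ∈ (0, 1/4)` there is `C(T,α) > 0` such that for
all `t ∈ (0,T]` and `δ, δ′ ∈ (0,1]`,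
`∫_ℝ e^{−2|x|} ∫_ℝ (p_{t+δ}(x−y) − p_{t+δ′}(x−y))² e^{|y|} dy dx
  ≤ C(T,α) |δ − δ′|^α t^{−2α−1/2}`. -/
theorem heatKernel_increment_weighted_L2_bound
    (T α : ℝ) (hT : 0 < T) (hα0 : 0 < α) (hα1 : α < 1 / 4) :
    ∃ C : ℝ, 0 < C ∧ ∀ t δ δ' : ℝ,
      0 < t → t ≤ T → 0 < δ → δ ≤ 1 → 0 < δ' → δ' ≤ 1 →
      ∫ x : ℝ, Real.exp (-2 * |x|) *
          ∫ y : ℝ, (heatKernel (t + δ) (x - y) - heatKernel (t + δ') (x - y)) ^ 2 *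
            Real.exp |y| ≤
        C * |δ - δ'| ^ α * t ^ (-2 * α - 1 / 2) := by
  have hα1' : α ≤ 1 := by linarith
  have hT2 : (0:ℝ) < T + 2 := by linarith
  set C₅ := (1+8*(T+2)) * rexp (2*(T+2)) * Real.sqrt (4*π) with hC₅
  have hC₅0 : 0 < C₅ := by
    rw [hC₅]
    apply mul_pos (mul_pos (by linarith) (Real.exp_pos _)) (Real.sqrt_pos.2 (by positivity))
  clear_value C₅
  refine ⟨32*π*(T+2)^α*C₅, by
    apply mul_pos (mul_pos (mul_pos (by norm_num) Real.pi_pos)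
      (Real.rpow_pos_of_pos hT2 α)) hC₅0, ?_⟩
  intro t δ δ' ht htT hδ hδ1 hδ'0 hδ'1
  set s₁ := t + δ with hs₁def
  set s₂ := t + δ' with hs₂def
  have hs₁ : 0 < s₁ := by rw [hs₁def]; linarith
  have hs₂ : 0 < s₂ := by rw [hs₂def]; linarith
  have hs₁I : s₁ ∈ Set.Icc t (T+2) := ⟨by rw [hs₁def]; linarith, by rw [hs₁def]; linarith⟩
  have hs₂I : s₂ ∈ Set.Icc t (T+2) := ⟨by rw [hs₂def]; linarith, by rw [hs₂def]; linarith⟩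
  set b₁ := (2-α)/(2*s₁) with hb₁
  set b₂ := (2-α)/(2*s₂) with hb₂
  have hb₁0 : 0 < b₁ := by rw [hb₁]; apply div_pos (by linarith) (by linarith)
  have hb₂0 : 0 < b₂ := by rw [hb₂]; apply div_pos (by linarith) (by linarith)
  set c₁ := ((Real.sqrt (2*π*s₁))⁻¹)^((2:ℝ)-α) with hc₁
  set c₂ := ((Real.sqrt (2*π*s₂))⁻¹)^((2:ℝ)-α) with hc₂
  have hc₁0 : 0 ≤ c₁ := by rw [hc₁]; positivity
  have hc₂0 : 0 ≤ c₂ := by rw [hc₂]; positivity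
  set M₁ := (1+4/b₁) * rexp (1/b₁) * Real.sqrt (2*π/b₁) with hM₁
  set M₂ := (1+4/b₂) * rexp (1/b₂) * Real.sqrt (2*π/b₂) with hM₂
  set A := (T+2)*|δ-δ'|/(t^2*Real.sqrt t) with hA
  have hA0 : 0 ≤ A := by
    rw [hA]
    apply div_nonneg (mul_nonneg (by linarith) (abs_nonneg _))
    have := Real.sqrt_nonneg t; positivity
  have hAα0 : 0 ≤ A^α := Real.rpow_nonneg hA0 α
  set g₁ : ℝ → ℝ := fun z => (1+z^2) * rexp (-(b₁*z^2)) * rexp |z| with hg₁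
  set g₂ : ℝ → ℝ := fun z => (1+z^2) * rexp (-(b₂*z^2)) * rexp |z| with hg₂
  have hint₁ : Integrable g₁ := by rw [hg₁]; exact gauss_integrable hb₁0
  have hint₂ : Integrable g₂ := by rw [hg₂]; exact gauss_integrable hb₂0
  have hI₁ : ∫ z, g₁ z ≤ M₁ := by simp only [hg₁, hM₁]; exact gauss_integral_le hb₁0
  have hI₂ : ∫ z, g₂ z ≤ M₂ := by simp only [hg₂, hM₂]; exact gauss_integral_le hb₂0
  set G : ℝ → ℝ := fun z => (A^α*4) * (c₁ * g₁ z + c₂ * g₂ z) with hG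
  set B := A^α * 4 * (c₁*M₁ + c₂*M₂) with hB
  clear_value s₁ s₂ b₁ b₂ c₁ c₂ M₁ M₂ A g₁ g₂ G B
  have hM₁0 : 0 ≤ M₁ := le_trans (integral_nonneg (fun z => by rw [hg₁]; positivity)) hI₁
  have hM₂0 : 0 ≤ M₂ := le_trans (integral_nonneg (fun z => by rw [hg₂]; positivity)) hI₂
  have hB0 : 0 ≤ B := by
    rw [hB]
    exact mul_nonneg (mul_nonneg hAα0 (by norm_num))
      (add_nonneg (mul_nonneg hc₁0 hM₁0) (mul_nonneg hc₂0 hM₂0))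
  have hGint : Integrable G := by
    rw [hG]; exact ((hint₁.const_mul c₁).add (hint₂.const_mul c₂)).const_mul _
  have hGle : ∫ z, G z ≤ B := by
    have hGval : ∫ z, G z = (A^α*4) * ((c₁ * ∫ z, g₁ z) + (c₂ * ∫ z, g₂ z)) := by
      rw [hG, integral_const_mul,
        integral_add (hint₁.const_mul c₁) (hint₂.const_mul c₂),
        integral_const_mul, integral_const_mul]
    rw [hGval, hB]
    apply mul_le_mul_of_nonneg_left
      (add_le_add (mul_le_mul_of_nonneg_left hI₁ hc₁0) (mul_le_mul_of_nonneg_left hI₂ hc₂0))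
      (mul_nonneg hAα0 (by norm_num))
  have hpoint : ∀ x y : ℝ,
      (heatKernel s₁ (x-y) - heatKernel s₂ (x-y))^2 * rexp |y| ≤ rexp |x| * G (x-y) := by
    intro x y
    set z := x - y with hz
    clear_value z
    have hd1 : |heatKernel s₁ z - heatKernel s₂ z| ≤ A*(1+z^2) := by
      have hmvt := heatKernel_sub_le ht htT hs₁I hs₂I z
      have habs : |s₁ - s₂| = |δ - δ'| := by rw [hs₁def, hs₂def]; congr 1; ring
      calc |heatKernel s₁ z - heatKernel s₂ z|
          ≤ (T+2)*(1+z^2)/(t^2*Real.sqrt t) * |s₁-s₂| := hmvt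
        _ = A*(1+z^2) := by rw [habs, hA]; ring
    have hd2 : |heatKernel s₁ z - heatKernel s₂ z| ≤ heatKernel s₁ z + heatKernel s₂ z := by
      refine (abs_sub _ _).trans ?_
      rw [abs_of_pos (heatKernel_pos hs₁ z), abs_of_pos (heatKernel_pos hs₂ z)]
    have hsq : (heatKernel s₁ z - heatKernel s₂ z)^2
        ≤ (A*(1+z^2))^α * (heatKernel s₁ z + heatKernel s₂ z)^((2:ℝ)-α) :=
      sq_le_rpow_mul hd1 hd2 hα0 (by linarith)
    have h1 : (A*(1+z^2))^α ≤ A^α * (1+z^2) := by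
      rw [Real.mul_rpow hA0 (by positivity)]
      apply mul_le_mul_of_nonneg_left ?_ hAα0
      calc (1+z^2)^α ≤ (1+z^2)^(1:ℝ) :=
            Real.rpow_le_rpow_of_exponent_le (by nlinarith [sq_nonneg z]) (by linarith)
        _ = 1+z^2 := Real.rpow_one _
    have hr₁ : heatKernel s₁ z ^ ((2:ℝ)-α) = c₁ * rexp (-(b₁*z^2)) := by
      rw [hc₁, hb₁]; exact heatKernel_rpow α hs₁ z
    have hr₂ : heatKernel s₂ z ^ ((2:ℝ)-α) = c₂ * rexp (-(b₂*z^2)) := by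
      rw [hc₂, hb₂]; exact heatKernel_rpow α hs₂ z
    have h2 : (heatKernel s₁ z + heatKernel s₂ z)^((2:ℝ)-α)
        ≤ 4*(c₁ * rexp (-(b₁*z^2)) + c₂ * rexp (-(b₂*z^2))) := by
      calc (heatKernel s₁ z + heatKernel s₂ z)^((2:ℝ)-α)
          ≤ 4*((heatKernel s₁ z)^((2:ℝ)-α) + (heatKernel s₂ z)^((2:ℝ)-α)) :=
            add_rpow_le_four_mul (heatKernel_pos hs₁ z).le (heatKernel_pos hs₂ z).le
              (by linarith) (by linarith)
        _ = _ := by rw [hr₁, hr₂]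
    have h3 : rexp |y| ≤ rexp |x| * rexp |z| := by
      rw [← Real.exp_add]
      apply Real.exp_le_exp.2
      calc |y| = |x - z| := by rw [hz]; congr 1; ring
        _ ≤ |x| + |z| := abs_sub x z
    have hL : (heatKernel s₁ z - heatKernel s₂ z)^2
        ≤ (A^α*(1+z^2)) * (4*(c₁ * rexp (-(b₁*z^2)) + c₂ * rexp (-(b₂*z^2)))) := by
      refine hsq.trans (mul_le_mul h1 h2
        (Real.rpow_nonneg (add_nonneg (heatKernel_pos hs₁ z).le (heatKernel_pos hs₂ z).le) _)
        (mul_nonneg hAα0 (by positivity)))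
    calc (heatKernel s₁ z - heatKernel s₂ z)^2 * rexp |y|
        ≤ ((A^α*(1+z^2)) * (4*(c₁ * rexp (-(b₁*z^2)) + c₂ * rexp (-(b₂*z^2)))))
            * (rexp |x| * rexp |z|) := by
          apply mul_le_mul hL h3 (Real.exp_pos _).le
          apply mul_nonneg (mul_nonneg hAα0 (by positivity)) (by positivity)
      _ = rexp |x| * G z := by simp only [hG, hg₁, hg₂]; ring
  have hinner : ∀ x : ℝ,
      (∫ y, (heatKernel s₁ (x-y) - heatKernel s₂ (x-y))^2 * rexp |y|) ≤ rexp |x| * B := by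
    intro x
    have hGxint : Integrable (fun y => rexp |x| * G (x - y)) :=
      Integrable.const_mul (hGint.comp_sub_left x) (rexp |x|)
    calc (∫ y, (heatKernel s₁ (x-y) - heatKernel s₂ (x-y))^2 * rexp |y|)
        ≤ ∫ y, rexp |x| * G (x-y) :=
          integral_mono_of_nonneg (Filter.Eventually.of_forall fun y => by positivity)
            hGxint (Filter.Eventually.of_forall fun y => hpoint x y)
      _ = rexp |x| * ∫ y, G (x - y) := integral_const_mul _ _
      _ = rexp |x| * ∫ z, G z := by rw [integral_sub_left_eq_self G volume x]
      _ ≤ rexp |x| * B := mul_le_mul_of_nonneg_left hGle (Real.exp_pos _).le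
  have houter : ∀ x : ℝ,
      rexp (-2*|x|) * (∫ y, (heatKernel s₁ (x-y) - heatKernel s₂ (x-y))^2 * rexp |y|)
        ≤ (B*4)*(1+x^2)⁻¹ := by
    intro x
    calc rexp (-2*|x|) * (∫ y, (heatKernel s₁ (x-y) - heatKernel s₂ (x-y))^2 * rexp |y|)
        ≤ rexp (-2*|x|) * (rexp |x| * B) :=
          mul_le_mul_of_nonneg_left (hinner x) (Real.exp_pos _).le
      _ = B * rexp (-|x|) := by
          rw [← mul_assoc, ← Real.exp_add, show -2*|x|+|x| = -|x| by ring]; ring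
      _ ≤ B * (4*(1+x^2)⁻¹) := mul_le_mul_of_nonneg_left (exp_neg_abs_le x) hB0
      _ = (B*4)*(1+x^2)⁻¹ := by ring
  have hF : (∫ x : ℝ, rexp (-2*|x|) *
      ∫ y, (heatKernel s₁ (x-y) - heatKernel s₂ (x-y))^2 * rexp |y|) ≤ (B*4)*π := by
    have hGout : Integrable (fun x : ℝ => (B*4)*(1+x^2)⁻¹) :=
      integrable_inv_one_add_sq.const_mul (B*4)
    calc (∫ x : ℝ, rexp (-2*|x|) *
        ∫ y, (heatKernel s₁ (x-y) - heatKernel s₂ (x-y))^2 * rexp |y|)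
        ≤ ∫ x : ℝ, (B*4)*(1+x^2)⁻¹ := by
          apply integral_mono_of_nonneg
            (Filter.Eventually.of_forall fun x => mul_nonneg (Real.exp_pos _).le
              (integral_nonneg fun y => by positivity))
            hGout (Filter.Eventually.of_forall houter)
      _ = (B*4)*π := by rw [integral_const_mul, integral_univ_inv_one_add_sq]
  -- arithmetic on the constants
  have hcM₁ : c₁ * M₁ ≤ C₅ * t^((α-1)/2) := by
    rw [hc₁, hM₁, hb₁, hC₅]
    exact coeff_le hα0 hα1' ht hs₁I.1 hs₁I.2
  have hcM₂ : c₂ * M₂ ≤ C₅ * t^((α-1)/2) := by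
    rw [hc₂, hM₂, hb₂, hC₅]
    exact coeff_le hα0 hα1' ht hs₂I.1 hs₂I.2
  have hBle : B ≤ A^α * 4 * (C₅ * t^((α-1)/2) + C₅ * t^((α-1)/2)) := by
    rw [hB]
    exact mul_le_mul_of_nonneg_left (add_le_add hcM₁ hcM₂) (mul_nonneg hAα0 (by norm_num))
  have h52 : t^2*Real.sqrt t = t^((5:ℝ)/2) := by
    rw [show (t:ℝ)^2 = t^((2:ℝ)) by rw [Real.rpow_two], Real.sqrt_eq_rpow, ← Real.rpow_add ht]
    norm_num
  have hAαeq : A^α = (T+2)^α * |δ-δ'|^α * t^(-(5/2*α)) := by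
    rw [hA, h52, Real.div_rpow (mul_nonneg (by linarith) (abs_nonneg _))
        (Real.rpow_nonneg ht.le _),
      Real.mul_rpow (by linarith : (0:ℝ) ≤ T+2) (abs_nonneg _),
      ← Real.rpow_mul ht.le, div_eq_mul_inv, ← Real.rpow_neg ht.le]
  have hpow : t^(-(5/2*α)) * t^((α-1)/2) = t^(-2*α-1/2) := by
    rw [← Real.rpow_add ht]
    congr 1
    ring
  refine hF.trans ?_
  calc (B*4)*π
      ≤ ((A^α * 4 * (C₅ * t^((α-1)/2) + C₅ * t^((α-1)/2)))*4)*π :=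
        mul_le_mul_of_nonneg_right (mul_le_mul_of_nonneg_right hBle (by norm_num))
          Real.pi_pos.le
    _ = 32*π*(T+2)^α*C₅ * |δ-δ'|^α * t^(-2*α-1/2) := by
        rw [hAαeq, ← hpow]
        ring
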